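/- Let ξ : Fin m → ℤ, η : Fin n → ℤ, ξ' : Fin m' → ℤ, η' : Fin n' → ℤ take values in {1, −1}, and let ξ ⊕ ξ' : Fin (m + m') → ℤ and η ⊕ η' : Fin (n + n') → ℤ denote the concatenated sign functions (via Fin.append). Then the assignment sending a vertex (i, j) of the product quiver A(ξ, η) × A(ξ', η') to i + j, and an arrow (e, e') with labels (x, y) and (x', y') to the arrow of A(ξ ⊕ ξ', η ⊕ η') with label (x ⊕ x', y ⊕ y') (concatenated tuples via Fin.append), is a well-defined prefunctor τ : A(ξ, η) × A(ξ', η') ⥤q A(ξ ⊕ ξ', η ⊕ η'). -/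

import Mathlib

universe u v

/-- The product quiver: an arrow `(a,c) ⟶ (b,d)` is a pair of an arrow `a ⟶ b`
and an arrow `c ⟶ d`. -/
instance prodQuiver (X Y : Type u) [Quiver.{v} X] [Quiver.{v} Y] : Quiver (X × Y) :=
  ⟨fun p q => (p.1 ⟶ q.1) × (p.2 ⟶ q.2)⟩

/-- The standard account `A(ξ, ζ)`: its vertices are the integers. -/
structure Acct {m n : ℕ} (ξ : Fin m → ℤ) (ζ : Fin n → ℤ) where
  val : ℤ

/-- An arrow from `r` to `s` in the standard account is a pair of tuples
`(x, y)` satisfying the continuity equation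
`s - r = ∑ i, ξ i * x i - ∑ j, ζ j * y j`; its label is the pair `(x, y)`. -/
instance accQuiver {m n : ℕ} (ξ : Fin m → ℤ) (ζ : Fin n → ℤ) : Quiver (Acct ξ ζ) :=
  ⟨fun r s => {xy : (Fin m → ℕ) × (Fin n → ℕ) //
    s.val - r.val = (∑ i, ξ i * (xy.1 i : ℤ)) - (∑ j, ζ j * (xy.2 j : ℤ))}⟩

/-- the assignment sending a vertex `(i, j)` of the product quiver
`A(ξ, η) × A(ξ', η')` to `i + j`, and an arrow `(e, e')` with labels `(x, y)` and
`(x', y')` to the arrow of `A(ξ ⊕ ξ', η ⊕ η')` with label `(x ⊕ x', y ⊕ y')`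
(concatenation via `Fin.append`), is a well-defined prefunctor `τ`. -/
theorem statement9 {m n m' n' : ℕ}
    (ξ : Fin m → ℤ) (η : Fin n → ℤ) (ξ' : Fin m' → ℤ) (η' : Fin n' → ℤ)
    (hξ : ∀ i, ξ i = 1 ∨ ξ i = -1) (hη : ∀ i, η i = 1 ∨ η i = -1)
    (hξ' : ∀ i, ξ' i = 1 ∨ ξ' i = -1) (hη' : ∀ i, η' i = 1 ∨ η' i = -1) :
    ∃ τ : (Acct ξ η × Acct ξ' η') ⥤q Acct (Fin.append ξ ξ') (Fin.append η η'),
      (∀ p : Acct ξ η × Acct ξ' η', (τ.obj p).val = p.1.val + p.2.val) ∧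
      (∀ (p q : Acct ξ η × Acct ξ' η') (e : p ⟶ q),
        (τ.map e).val =
          (Fin.append e.1.val.1 e.2.val.1, Fin.append e.1.val.2 e.2.val.2)) := by
  have key : ∀ {a b : ℕ} (f : Fin a → ℤ) (g : Fin b → ℤ) (u : Fin a → ℕ) (v : Fin b → ℕ),
      (∑ i, Fin.append f g i * ((Fin.append u v i : ℕ) : ℤ)) =
        (∑ i, f i * (u i : ℤ)) + (∑ j, g j * (v j : ℤ)) := by
    intro a b f g u v
    rw [Fin.sum_univ_add]
    simp [Fin.append_left, Fin.append_right]
  refine ⟨{ obj := fun p => ⟨p.1.val + p.2.val⟩,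
            map := fun {p q} e =>
              ⟨(Fin.append e.1.val.1 e.2.val.1, Fin.append e.1.val.2 e.2.val.2), ?_⟩ },
          fun p => rfl, fun p q e => rfl⟩
  obtain ⟨⟨⟨x, y⟩, h1⟩, ⟨⟨x', y'⟩, h2⟩⟩ := e
  simp only [key]
  dsimp at h1 h2 ⊢
  omega
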